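/- Let f : [0,1] → ℝ be a continuous increasing function and C ≥ 0, and define σ²(x,y) = |f(x) − f(y)| + C. Then the functional P(σ,·) : μ ↦ ∫∫σ²(x,y) dμ(x) dμ(y) is concave on the set of Borel probability measures on [0,1]: for all probability measures μ, ν on [0,1] and all t ∈ [0,1], P(σ, tμ + (1−t)ν) ≥ t·P(σ,μ) + (1−t)·P(σ,ν). -/

import Mathlib

open MeasureTheory

open Set
open scoped ENNReal

private lemma ennreal_amgm (a b : ℝ≥0∞) : a * b + b * a ≤ a * a + b * b := by
  rcases le_total a b with hab | hab
  · obtain ⟨c, rfl⟩ := exists_add_of_le hab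
    exact le_iff_exists_add.mpr ⟨c * c, by ring⟩
  · obtain ⟨c, rfl⟩ := exists_add_of_le hab
    exact le_iff_exists_add.mpr ⟨c * c, by ring⟩

private lemma double_integral_eq (h : ℝ → ℝ) (hc : Continuous h) (hm : Monotone h)
    (h0 : ∀ x, 0 ≤ h x) (M : ℝ) (hM : ∀ x, h x ≤ M) (C : ℝ)
    (α β : Measure ℝ) [IsProbabilityMeasure α] [IsProbabilityMeasure β] :
    ∫ x, ∫ y, (|h x - h y| + C) ∂β ∂α
      = (∫ x, h x ∂α) + (∫ x, h x ∂β) + C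
        - 2 * (∫⁻ s in Set.Ioi (0:ℝ), α {x | s < h x} * β {x | s < h x}).toReal := by
  have hmin_cont : Continuous fun p : ℝ × ℝ => h (min p.1 p.2) :=
    hc.comp (continuous_fst.min continuous_snd)
  have habs : ∀ x y, |h x - h y| ≤ M := fun x y =>
    abs_sub_le_iff.mpr ⟨by linarith [h0 y, hM x], by linarith [h0 x, hM y]⟩
  have intK : Integrable (fun p : ℝ × ℝ => |h p.1 - h p.2| + C) (α.prod β) :=
    ⟨(((hc.comp continuous_fst).sub (hc.comp continuous_snd)).abs.add
        continuous_const).aestronglyMeasurable,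
     HasFiniteIntegral.of_bounded (C := M + |C|) (Filter.Eventually.of_forall fun p => by
       rw [Real.norm_eq_abs]
       calc |(|h p.1 - h p.2| + C)| ≤ |(|h p.1 - h p.2|)| + |C| := abs_add_le _ _
         _ ≤ M + |C| := by rw [abs_abs]; linarith [habs p.1 p.2])⟩
  have intmin : Integrable (fun p : ℝ × ℝ => h (min p.1 p.2)) (α.prod β) :=
    ⟨hmin_cont.aestronglyMeasurable,
     HasFiniteIntegral.of_bounded (C := M) (Filter.Eventually.of_forall fun p => by
       rw [Real.norm_eq_abs, abs_of_nonneg (h0 _)]; exact hM _)⟩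
  have int1 : Integrable (fun p : ℝ × ℝ => h p.1) (α.prod β) :=
    ⟨(hc.comp continuous_fst).aestronglyMeasurable,
     HasFiniteIntegral.of_bounded (C := M) (Filter.Eventually.of_forall fun p => by
       rw [Real.norm_eq_abs, abs_of_nonneg (h0 _)]; exact hM _)⟩
  have int2 : Integrable (fun p : ℝ × ℝ => h p.2) (α.prod β) :=
    ⟨(hc.comp continuous_snd).aestronglyMeasurable,
     HasFiniteIntegral.of_bounded (C := M) (Filter.Eventually.of_forall fun p => by
       rw [Real.norm_eq_abs, abs_of_nonneg (h0 _)]; exact hM _)⟩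
  have hmineq : ∫ p : ℝ × ℝ, h (min p.1 p.2) ∂(α.prod β)
      = (∫⁻ s in Set.Ioi (0:ℝ), α {x | s < h x} * β {x | s < h x}).toReal := by
    rw [integral_eq_lintegral_of_nonneg_ae (Filter.Eventually.of_forall fun p => h0 _)
      hmin_cont.aestronglyMeasurable]
    congr 1
    rw [lintegral_eq_lintegral_meas_lt _ (Filter.Eventually.of_forall fun p => h0 _)
      hmin_cont.measurable.aemeasurable]
    refine lintegral_congr fun s => ?_
    have : {p : ℝ × ℝ | s < h (min p.1 p.2)} = {x | s < h x} ×ˢ {x | s < h x} := by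
      ext p
      simp only [Set.mem_setOf_eq, Set.mem_prod, hm.map_min, lt_min_iff]
    rw [this, Measure.prod_prod]
  have hpt : (fun p : ℝ × ℝ => |h p.1 - h p.2| + C)
      = fun p => (h p.1 + h p.2 + C) - 2 * h (min p.1 p.2) := by
    funext p
    rcases le_total p.1 p.2 with hxy | hxy
    · rw [min_eq_left hxy, abs_of_nonpos (by linarith [hm hxy])]; ring
    · rw [min_eq_right hxy, abs_of_nonneg (by linarith [hm hxy])]; ring
  have intadd : Integrable (fun p : ℝ × ℝ => h p.1 + h p.2) (α.prod β) := int1.add int2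
  have intsum : Integrable (fun p : ℝ × ℝ => h p.1 + h p.2 + C) (α.prod β) :=
    intadd.add (integrable_const C)
  have intsum2 : Integrable (fun p : ℝ × ℝ => 2 * h (min p.1 p.2)) (α.prod β) :=
    intmin.const_mul 2
  rw [MeasureTheory.integral_integral intK, hpt,
    integral_sub intsum intsum2,
    integral_add intadd (integrable_const C), integral_add int1 int2,
    integral_const_mul, integral_fun_fst, integral_fun_snd, integral_const, hmineq]
  simp [measure_univ]


private lemma L_lt_top (h : ℝ → ℝ) (M : ℝ) (hM : ∀ x, h x ≤ M)
    (α β : Measure ℝ) [IsProbabilityMeasure α] [IsProbabilityMeasure β] :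
    (∫⁻ s in Set.Ioi (0:ℝ), α {x | s < h x} * β {x | s < h x}) ≠ ⊤ := by
  have hle : (∫⁻ s in Set.Ioi (0:ℝ), α {x | s < h x} * β {x | s < h x})
      ≤ ∫⁻ s in Set.Ioi (0:ℝ), (Set.Iio M).indicator 1 s := by
    refine lintegral_mono fun s => ?_
    by_cases hs : s < M
    · rw [Set.indicator_of_mem (Set.mem_Iio.mpr hs)]
      exact le_trans (mul_le_one' prob_le_one prob_le_one) le_rfl
    · have : {x | s < h x} = (∅ : Set ℝ) := by
        ext x; simp only [Set.mem_setOf_eq, Set.mem_empty_iff_false, iff_false, not_lt]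
        exact le_trans (hM x) (not_lt.mp hs)
      rw [this]
      simp
  refine ne_top_of_le_ne_top ?_ hle
  rw [lintegral_indicator_one measurableSet_Iio, Measure.restrict_apply measurableSet_Iio]
  rw [Set.Iio_inter_Ioi, Real.volume_Ioo]
  exact ENNReal.ofReal_ne_top


private lemma key_ineq (h : ℝ → ℝ) (hc : Continuous h) (hm : Monotone h)
    (h0 : ∀ x, 0 ≤ h x) (M : ℝ) (hM : ∀ x, h x ≤ M) (C : ℝ)
    (μ ν : Measure ℝ) [IsProbabilityMeasure μ] [IsProbabilityMeasure ν] :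
    (∫ x, ∫ y, (|h x - h y| + C) ∂μ ∂μ) + (∫ x, ∫ y, (|h x - h y| + C) ∂ν ∂ν)
      ≤ (∫ x, ∫ y, (|h x - h y| + C) ∂ν ∂μ) + (∫ x, ∫ y, (|h x - h y| + C) ∂μ ∂ν) := by
  rw [double_integral_eq h hc hm h0 M hM C μ μ, double_integral_eq h hc hm h0 M hM C ν ν,
    double_integral_eq h hc hm h0 M hM C μ ν, double_integral_eq h hc hm h0 M hM C ν μ]
  have m1 : Measurable fun s : ℝ => μ {x | s < h x} :=
    Antitone.measurable fun s1 s2 hs => measure_mono fun x hx => lt_of_le_of_lt hs hx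
  have m2 : Measurable fun s : ℝ => ν {x | s < h x} :=
    Antitone.measurable fun s1 s2 hs => measure_mono fun x hx => lt_of_le_of_lt hs hx
  have keyL : (∫⁻ s in Set.Ioi (0:ℝ), μ {x | s < h x} * ν {x | s < h x})
        + (∫⁻ s in Set.Ioi (0:ℝ), ν {x | s < h x} * μ {x | s < h x})
      ≤ (∫⁻ s in Set.Ioi (0:ℝ), μ {x | s < h x} * μ {x | s < h x})
        + (∫⁻ s in Set.Ioi (0:ℝ), ν {x | s < h x} * ν {x | s < h x}) := by
    rw [← lintegral_add_left (by exact m1.mul m2 : Measurable fun s => μ {x | s < h x} * ν {x | s < h x}), ← lintegral_add_left (by exact m1.mul m1 : Measurable fun s => μ {x | s < h x} * μ {x | s < h x})]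
    exact lintegral_mono fun s => ennreal_amgm _ _
  have hreal : (∫⁻ s in Set.Ioi (0:ℝ), μ {x | s < h x} * ν {x | s < h x}).toReal
        + (∫⁻ s in Set.Ioi (0:ℝ), ν {x | s < h x} * μ {x | s < h x}).toReal
      ≤ (∫⁻ s in Set.Ioi (0:ℝ), μ {x | s < h x} * μ {x | s < h x}).toReal
        + (∫⁻ s in Set.Ioi (0:ℝ), ν {x | s < h x} * ν {x | s < h x}).toReal := by
    rw [← ENNReal.toReal_add (L_lt_top h M hM μ ν) (L_lt_top h M hM ν μ),
      ← ENNReal.toReal_add (L_lt_top h M hM μ μ) (L_lt_top h M hM ν ν)]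
    exact ENNReal.toReal_mono
      (by exact ENNReal.add_ne_top.mpr ⟨L_lt_top h M hM μ μ, L_lt_top h M hM ν ν⟩) keyL
  linarith


/-- For `σ²(x,y) = |f(x) − f(y)| + C` with `f` continuous and increasing
on `[0,1]` and `C ≥ 0`, the functional `P(σ,μ) = ∫∫ σ²(x,y) dμ(x) dμ(y)` is concave on the
set of Borel probability measures on `[0,1]`. -/
theorem P_concave_of_increasing_profile
    (f : ℝ → ℝ) (hf : ContinuousOn f (Set.Icc (0:ℝ) 1))
    (hmono : MonotoneOn f (Set.Icc (0:ℝ) 1))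
    (C : ℝ) (hC : 0 ≤ C)
    (μ ν : Measure ℝ) [IsProbabilityMeasure μ] [IsProbabilityMeasure ν]
    (hμ : μ (Set.Icc (0:ℝ) 1)ᶜ = 0) (hν : ν (Set.Icc (0:ℝ) 1)ᶜ = 0)
    (t : ℝ) (ht0 : 0 ≤ t) (ht1 : t ≤ 1) :
    t * (∫ x, ∫ y, (|f x - f y| + C) ∂μ ∂μ) +
        (1 - t) * (∫ x, ∫ y, (|f x - f y| + C) ∂ν ∂ν) ≤
      ∫ x, ∫ y, (|f x - f y| + C)
          ∂(ENNReal.ofReal t • μ + ENNReal.ofReal (1 - t) • ν)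
        ∂(ENNReal.ofReal t • μ + ENNReal.ofReal (1 - t) • ν) := by
  have ht1' : (0:ℝ) ≤ 1 - t := by linarith
  -- the clamped version of f
  set c : ℝ → ℝ := fun x => min (max x 0) 1 with hcdef
  have hcmem : ∀ x, c x ∈ Set.Icc (0:ℝ) 1 := fun x =>
    ⟨le_min (le_max_right x 0) zero_le_one, min_le_right _ _⟩
  have hccont : Continuous c := (continuous_id.max continuous_const).min continuous_const
  have hcmono : Monotone c := fun a b hab => by
    simp only [hcdef]; gcongr
  set h : ℝ → ℝ := fun x => f (c x) - f 0 with hhdef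
  have hc : Continuous h := (hf.comp_continuous hccont hcmem).sub continuous_const
  have hm : Monotone h := fun a b hab =>
    sub_le_sub_right (hmono (hcmem a) (hcmem b) (hcmono hab)) _
  have h0 : ∀ x, 0 ≤ h x := fun x =>
    sub_nonneg.mpr (hmono ⟨le_rfl, zero_le_one⟩ (hcmem x) (hcmem x).1)
  have hM : ∀ x, h x ≤ f 1 - f 0 := fun x =>
    sub_le_sub_right (hmono (hcmem x) ⟨zero_le_one, le_rfl⟩ (hcmem x).2) _
  have heq : ∀ x ∈ Set.Icc (0:ℝ) 1, h x = f x - f 0 := by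
    intro x hx
    simp only [hhdef, hcdef, max_eq_left hx.1, min_eq_left hx.2]
  -- the combined measure
  set lam : Measure ℝ := ENNReal.ofReal t • μ + ENNReal.ofReal (1 - t) • ν with hlamdef
  have hlamprob : IsProbabilityMeasure lam := by
    constructor
    simp only [hlamdef, Measure.add_apply, Measure.smul_apply, smul_eq_mul, measure_univ,
      mul_one]
    rw [← ENNReal.ofReal_add ht0 ht1']
    norm_num
  have hlam0 : lam (Set.Icc (0:ℝ) 1)ᶜ = 0 := by
    simp [hlamdef, Measure.add_apply, Measure.smul_apply, hμ, hν]
  -- conversion from f to h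
  have conv : ∀ (α : Measure ℝ), α (Set.Icc (0:ℝ) 1)ᶜ = 0 →
      ∫ x, ∫ y, (|f x - f y| + C) ∂α ∂α = ∫ x, ∫ y, (|h x - h y| + C) ∂α ∂α := by
    intro α hα
    have hae : ∀ᵐ x ∂α, x ∈ Set.Icc (0:ℝ) 1 := by
      rw [ae_iff]
      convert hα using 2
      rfl
    refine integral_congr_ae ?_
    filter_upwards [hae] with x hx
    refine integral_congr_ae ?_
    filter_upwards [hae] with y hy
    rw [heq x hx, heq y hy]
    have : f x - f 0 - (f y - f 0) = f x - f y := by ring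
    rw [this]
  -- bounded continuous integrands: integrability facts
  have habs : ∀ x y, |h x - h y| ≤ f 1 - f 0 := fun x y =>
    abs_sub_le_iff.mpr ⟨by linarith [h0 y, hM x], by linarith [h0 x, hM y]⟩
  have hKbd : ∀ x y, ‖|h x - h y| + C‖ ≤ (f 1 - f 0) + C := fun x y => by
    rw [Real.norm_eq_abs, abs_of_nonneg (add_nonneg (abs_nonneg _) hC)]
    linarith [habs x y]
  have intK : ∀ x (α : Measure ℝ) [IsFiniteMeasure α],
      Integrable (fun y => |h x - h y| + C) α := by
    intro x α _
    exact ⟨(((continuous_const.sub hc).abs).add continuous_const).aestronglyMeasurable,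
      HasFiniteIntegral.of_bounded (C := (f 1 - f 0) + C)
        (Filter.Eventually.of_forall fun y => hKbd x y)⟩
  have measG : ∀ (β : Measure ℝ) [SFinite β],
      StronglyMeasurable fun x => ∫ y, (|h x - h y| + C) ∂β := by
    intro β _
    exact ((((hc.comp continuous_fst).sub (hc.comp continuous_snd)).abs.add
      continuous_const).stronglyMeasurable).integral_prod_right'
  have intG : ∀ (β α : Measure ℝ) [IsProbabilityMeasure β] [IsFiniteMeasure α],
      Integrable (fun x => ∫ y, (|h x - h y| + C) ∂β) α := by
    intro β α _ _
    refine ⟨(measG β).aestronglyMeasurable,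
      HasFiniteIntegral.of_bounded (C := (f 1 - f 0) + C)
        (Filter.Eventually.of_forall fun x => ?_)⟩
    calc ‖∫ y, (|h x - h y| + C) ∂β‖
        ≤ ((f 1 - f 0) + C) * (β Set.univ).toReal :=
          norm_integral_le_of_norm_le_const (Filter.Eventually.of_forall fun y => hKbd x y)
      _ = (f 1 - f 0) + C := by simp [measure_univ]
  -- integral over lam decomposes
  have declam : ∀ F : ℝ → ℝ, Integrable F μ → Integrable F ν →
      ∫ x, F x ∂lam = t * (∫ x, F x ∂μ) + (1 - t) * (∫ x, F x ∂ν) := by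
    intro F h1 h2
    rw [hlamdef, integral_add_measure (h1.smul_measure ENNReal.ofReal_ne_top)
        (h2.smul_measure ENNReal.ofReal_ne_top),
      integral_smul_measure, integral_smul_measure, ENNReal.toReal_ofReal ht0,
      ENNReal.toReal_ofReal ht1', smul_eq_mul, smul_eq_mul]
  -- expand the right-hand side
  have inner : ∀ x, ∫ y, (|h x - h y| + C) ∂lam
      = t * (∫ y, (|h x - h y| + C) ∂μ) + (1 - t) * (∫ y, (|h x - h y| + C) ∂ν) :=
    fun x => declam _ (intK x μ) (intK x ν)
  have expand : ∫ x, ∫ y, (|h x - h y| + C) ∂lam ∂lam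
      = t * (t * (∫ x, ∫ y, (|h x - h y| + C) ∂μ ∂μ)
              + (1 - t) * (∫ x, ∫ y, (|h x - h y| + C) ∂μ ∂ν))
        + (1 - t) * (t * (∫ x, ∫ y, (|h x - h y| + C) ∂ν ∂μ)
              + (1 - t) * (∫ x, ∫ y, (|h x - h y| + C) ∂ν ∂ν)) := by
    have e1 : ∫ x, ∫ y, (|h x - h y| + C) ∂lam ∂lam
        = ∫ x, (t * (∫ y, (|h x - h y| + C) ∂μ)
            + (1 - t) * (∫ y, (|h x - h y| + C) ∂ν)) ∂lam := by
      exact integral_congr_ae (Filter.Eventually.of_forall fun x => inner x)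
    rw [e1]
    have i1 : Integrable (fun x => t * (∫ y, (|h x - h y| + C) ∂μ)) lam :=
      (intG μ lam).const_mul t
    have i2 : Integrable (fun x => (1 - t) * (∫ y, (|h x - h y| + C) ∂ν)) lam :=
      (intG ν lam).const_mul (1 - t)
    rw [integral_add i1 i2, integral_const_mul, integral_const_mul,
      declam _ (intG μ μ) (intG μ ν), declam _ (intG ν μ) (intG ν ν)]
  rw [conv μ hμ, conv ν hν, conv lam hlam0, expand]
  have key := key_ineq h hc hm h0 (f 1 - f 0) hM C μ ν
  nlinarith [mul_nonneg ht0 ht1', sq_nonneg t, sq_nonneg (1 - t),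
    mul_nonneg (mul_nonneg ht0 ht1')
      (sub_nonneg.mpr key)]
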